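/- Let B be an abelian group with a family of homomorphisms r_v : B → T_v to torsion abelian groups (v ∈ V). Let P1, P2 ∈ B and x a positive integer, y a nonzero integer with x·P1 = y·P2. Suppose e1, e2 are integers with Q1 = e1·P1, Q2 = e2·P2, and that for all positive integers m1, m2 and all but finitely many v, m1·r_v(P1) + m2·r_v(P2) = 0 implies m1·r_v(Q1) + m2·r_v(Q2) = 0. Assume also that for every prime ℓ and every k ∈ ℕ there are infinitely many v such that r_v(P2) has order exactly ℓ^k. Then e1 = e2, provided P2 has infinite order. -/

import Mathlib

theorem stmt_15 {B V : Type*} [AddCommGroup B]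
    {T : V → Type*} [∀ v, AddCommGroup (T v)]
    (htors : ∀ v, ∀ t : T v, IsOfFinAddOrder t)
    (r : ∀ v, B →+ T v)
    (P1 P2 Q1 Q2 : B) (x y : ℤ) (hx : 0 < x) (hy : y ≠ 0)
    (hdep : x • P1 = y • P2)
    (e1 e2 : ℤ) (hQ1 : Q1 = e1 • P1) (hQ2 : Q2 = e2 • P2)
    (hsupp : ∀ m1 m2 : ℕ, 0 < m1 → 0 < m2 →
      {v : V | ¬ (m1 • r v P1 + m2 • r v P2 = 0 →
        m1 • r v Q1 + m2 • r v Q2 = 0)}.Finite)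
    (hord : ∀ ℓ : ℕ, ℓ.Prime → ∀ k : ℕ,
      {v : V | addOrderOf (r v P2) = ℓ ^ k}.Infinite)
    (hP2 : ¬ IsOfFinAddOrder P2) :
    e1 = e2 := by
  by_contra hne
  set c : ℤ := y * (e1 - e2) with hc
  have hc0 : c ≠ 0 := by
    apply mul_ne_zero hy
    exact sub_ne_zero.mpr hne
  -- choose k with 2^k > |c|
  set k : ℕ := c.natAbs with hk
  have hklt : c.natAbs < 2 ^ k := Nat.lt_two_pow_self
  set n : ℕ := 2 ^ k with hn
  have hn0 : (0:ℤ) < (n:ℤ) := by positivity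
  -- define m1, m2
  set m1 : ℕ := x.toNat with hm1
  have hm1pos : 0 < m1 := by
    simp [hm1, Int.lt_toNat, hx]
  have hm1c : (m1 : ℤ) = x := Int.toNat_of_nonneg hx.le
  have hm2nn : (0:ℤ) ≤ (n:ℤ) * (y.natAbs + 1) - y := by
    have h1 : y ≤ (y.natAbs : ℤ) := Int.le_natAbs
    have h2 : (y.natAbs : ℤ) + 1 ≤ (n:ℤ) * (y.natAbs + 1) := by
      nlinarith
    linarith
  set m2 : ℕ := ((n:ℤ) * (y.natAbs + 1) - y).toNat with hm2
  have hm2c : (m2 : ℤ) = (n:ℤ) * (y.natAbs + 1) - y := Int.toNat_of_nonneg hm2nn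
  have hm2pos : 0 < m2 := by
    have h1 : y < (y.natAbs : ℤ) + 1 := by
      have := Int.le_natAbs (a := y); linarith
    have h2 : (y.natAbs : ℤ) + 1 ≤ (n:ℤ) * (y.natAbs + 1) := by nlinarith
    have : (0:ℤ) < (m2:ℤ) := by rw [hm2c]; linarith
    exact_mod_cast this
  -- divisibility facts
  have hdvd_ym2 : (n:ℤ) ∣ y + (m2:ℤ) := by
    rw [hm2c]; exact ⟨(y.natAbs + 1), by ring⟩
  -- pick v in the infinite order set avoiding the finite bad set
  obtain ⟨v, hvS, hvF⟩ :=
    ((hord 2 Nat.prime_two k).diff (hsupp m1 m2 hm1pos hm2pos)).nonempty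
  simp only [Set.mem_setOf_eq] at hvS
  set t : T v := r v P2 with ht
  have htord : addOrderOf t = n := hvS
  have hrel : (x:ℤ) • r v P1 = y • t := by
    have := congrArg (r v) hdep
    simpa [map_zsmul] using this
  have hzero : m1 • r v P1 + m2 • r v P2 = 0 := by
    have : (m1:ℤ) • r v P1 + (m2:ℤ) • r v P2 = 0 := by
      rw [hm1c, hrel, ← ht, ← add_zsmul]
      rw [← addOrderOf_dvd_iff_zsmul_eq_zero, htord]
      exact hdvd_ym2
    simpa [natCast_zsmul] using this
  have hconc : m1 • r v Q1 + m2 • r v Q2 = 0 := by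
    by_contra hcon
    exact hvF (by simp only [Set.mem_setOf_eq]; intro h; exact hcon (h hzero))
  -- extract divisibility
  have hconcz : (e1 * y + (m2:ℤ) * e2) • t = 0 := by
    have h := hconc
    rw [hQ1, hQ2] at h
    have h' : (m1:ℤ) • (e1 • r v P1) + (m2:ℤ) • (e2 • r v P2) = 0 := by
      simpa [map_zsmul, natCast_zsmul] using h
    calc (e1 * y + (m2:ℤ) * e2) • t
        = e1 • (y • t) + (m2:ℤ) • (e2 • t) := by
          rw [add_zsmul, mul_zsmul, mul_zsmul]
      _ = (m1:ℤ) • (e1 • r v P1) + (m2:ℤ) • (e2 • r v P2) := by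
          rw [← hrel, ← ht, smul_comm e1 x (r v P1), ← hm1c]
      _ = 0 := h'
  have hdvd1 : (n:ℤ) ∣ e1 * y + (m2:ℤ) * e2 := by
    rw [← htord]
    exact addOrderOf_dvd_iff_zsmul_eq_zero.mpr hconcz
  have hdvd2 : (n:ℤ) ∣ (y + (m2:ℤ)) * e2 := Dvd.dvd.mul_right hdvd_ym2 e2
  have hdvdc : (n:ℤ) ∣ c := by
    have : c = (e1 * y + (m2:ℤ) * e2) - (y + (m2:ℤ)) * e2 := by ring
    rw [this]; exact dvd_sub hdvd1 hdvd2
  have : (n:ℤ) ≤ |c| := Int.le_of_dvd (abs_pos.mpr hc0) ((dvd_abs _ _).mpr hdvdc)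
  have habs : |c| = (c.natAbs : ℤ) := (Int.abs_eq_natAbs c)
  have : (n:ℤ) ≤ (c.natAbs : ℤ) := habs ▸ this
  have : n ≤ c.natAbs := by exact_mod_cast this
  omega
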